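/- arXiv:math/0001047 — 2 statements merged into one kernel-verified Lean document; each statement's English description precedes it below -/
import Mathlib

section
/- The function u(z) = ln|z - 1/2| + ln|z + 1/2| + Σ_{n=1}^∞ 2^{-n}(ln|z - n/(2n+1)| + ln|z + n/(2n+1)|) is harmonic on D \ (E₊ ∪ E₋), where D is the open unit disc, and u(z) → -∞ as z tends to any point of E₊ ∪ E₋. -/
open Filter Topology

/-- A real function on `ℂ` is harmonic on a set if near every point of the set it is
the real part of a holomorphic function. -/
def IsHarmonicOn (f : ℂ → ℝ) (s : Set ℂ) : Prop :=
  ∀ z ∈ s, ∃ r > (0 : ℝ), ∃ g : ℂ → ℂ,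
    DifferentiableOn ℂ g (Metric.ball z r) ∧
    ∀ w ∈ Metric.ball z r ∩ s, f w = (g w).re

noncomputable def Eplus : Set ℂ :=
  {(1 / 2 : ℂ)} ∪ {z : ℂ | ∃ n : ℕ, 1 ≤ n ∧ z = (n : ℂ) / (2 * n + 1)}

noncomputable def Eminus : Set ℂ := (fun z => -z) '' Eplus

/-- The function `u`, defined by the logarithmic series. -/
noncomputable def uFun (z : ℂ) : ℝ :=
  Real.log ‖z - 1 / 2‖ + Real.log ‖z + 1 / 2‖ +
    ∑' n : ℕ, (2 : ℝ) ^ (-((n : ℤ) + 1)) *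
      (Real.log ‖z - ((n : ℂ) + 1) / (2 * ((n : ℂ) + 1) + 1)‖ +
       Real.log ‖z + ((n : ℂ) + 1) / (2 * ((n : ℂ) + 1) + 1)‖)



noncomputable def aC (n : ℕ) : ℂ := ((n : ℂ) + 1) / (2 * ((n : ℂ) + 1) + 1)
noncomputable def aR (n : ℕ) : ℝ := ((n : ℝ) + 1) / (2 * ((n : ℝ) + 1) + 1)

lemma aC_eq (n : ℕ) : aC n = ((aR n : ℝ) : ℂ) := by
  unfold aC aR; push_cast; ring

lemma aR_pos (n : ℕ) : 0 < aR n := by unfold aR; positivity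

lemma aR_lt_half (n : ℕ) : aR n < 1/2 := by
  unfold aR
  rw [div_lt_iff₀ (by positivity)]
  push_cast
  linarith [Nat.cast_nonneg (α := ℝ) n]

lemma aR_sub_half (n : ℕ) : |aR n - 1/2| ≤ 1/((n:ℝ)+1) := by
  have h3 : (0:ℝ) < 2*((n:ℝ)+1)+1 := by positivity
  have : aR n - 1/2 = -(1/(2*(2*((n:ℝ)+1)+1))) := by
    unfold aR; field_simp; ring
  rw [this, abs_neg, abs_of_nonneg (by positivity)]
  rw [div_le_div_iff₀ (by positivity) (by positivity)]
  nlinarith [Nat.cast_nonneg (α := ℝ) n]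

lemma norm_aC (n : ℕ) : ‖aC n‖ = aR n := by
  rw [aC_eq, Complex.norm_real, Real.norm_eq_abs, abs_of_pos (aR_pos n)]

lemma norm_aC_le (n : ℕ) : ‖aC n‖ ≤ 1/2 := by
  rw [norm_aC]; exact (aR_lt_half n).le

lemma norm_aC_sub_half (n : ℕ) : ‖aC n - 1/2‖ ≤ 1/((n:ℝ)+1) := by
  have h : aC n - 1/2 = (((aR n - 1/2 : ℝ)) : ℂ) := by rw [aC_eq]; push_cast; ring
  rw [h, Complex.norm_real, Real.norm_eq_abs]
  exact aR_sub_half n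

lemma half_mem : (1/2 : ℂ) ∈ Eplus := Or.inl rfl

lemma aC_mem (n : ℕ) : aC n ∈ Eplus := by
  refine Or.inr ⟨n + 1, Nat.le_add_left 1 n, ?_⟩
  unfold aC; push_cast; ring

lemma neg_mem {x : ℂ} (h : x ∈ Eplus) : -x ∈ Eminus := ⟨x, h, rfl⟩

lemma mem_cases {x : ℂ} (hx : x ∈ Eplus ∪ Eminus) :
    x = 1/2 ∨ x = -(1/2) ∨ (∃ k, x = aC k) ∨ (∃ k, x = -aC k) := by
  have base : ∀ y ∈ Eplus, y = 1/2 ∨ ∃ k, y = aC k := by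
    intro y hy
    rcases hy with hy | ⟨n, hn, hy⟩
    · exact Or.inl hy
    · obtain ⟨m, rfl⟩ := Nat.exists_eq_add_of_le hn
      refine Or.inr ⟨m, ?_⟩
      rw [hy]; unfold aC; push_cast; ring
  rcases hx with hx | ⟨y, hy, rfl⟩
  · rcases base x hx with h | ⟨k, h⟩
    exacts [Or.inl h, Or.inr (Or.inr (Or.inl ⟨k, h⟩))]
  · rcases base y hy with h | ⟨k, h⟩
    · exact Or.inr (Or.inl (by rw [h]))
    · exact Or.inr (Or.inr (Or.inr ⟨k, by rw [h]⟩))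

-- weights
lemma w2_eq (n : ℕ) : (2:ℝ) ^ (-((n:ℤ)+1)) = (2⁻¹:ℝ) ^ (n+1) := by
  have h : (-((n:ℤ)+1)) = -((n+1 : ℕ) : ℤ) := by push_cast; ring
  rw [h, zpow_neg, zpow_natCast, ← inv_pow]

lemma w2_pos (n : ℕ) : 0 < (2:ℝ) ^ (-((n:ℤ)+1)) := by positivity

lemma w2_le_one (n : ℕ) : (2:ℝ) ^ (-((n:ℤ)+1)) ≤ 1 := by
  rw [w2_eq]; exact pow_le_one₀ (by norm_num) (by norm_num)

lemma summable_w2_mul {g : ℕ → ℝ} {C : ℝ} (hg : ∀ n, |g n| ≤ C) :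
    Summable (fun n : ℕ => (2:ℝ) ^ (-((n:ℤ)+1)) * g n) := by
  refine Summable.of_norm_bounded (g := fun n : ℕ => (2⁻¹:ℝ)^n * (2⁻¹ * C))
    ((summable_geometric_of_lt_one (by norm_num) (by norm_num)).mul_right _) ?_
  intro n
  rw [Real.norm_eq_abs, abs_mul, abs_of_pos (w2_pos n), w2_eq, pow_succ]
  have h1 : (0:ℝ) ≤ (2⁻¹:ℝ)^n := by positivity
  have := hg n
  nlinarith

lemma tsum_w2_mul_const (C : ℝ) : ∑' n : ℕ, (2:ℝ) ^ (-((n:ℤ)+1)) * C = C := by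
  have h : ∀ n : ℕ, (2:ℝ) ^ (-((n:ℤ)+1)) * C = (2⁻¹ * C) * (2⁻¹:ℝ)^n := by
    intro n; rw [w2_eq, pow_succ]; ring
  rw [tsum_congr h, tsum_mul_left, tsum_geometric_of_lt_one (by norm_num) (by norm_num)]
  ring

-- log lemmas
lemma log_le_one_of_le_two {t : ℝ} (h0 : 0 ≤ t) (h : t ≤ 2) : Real.log t ≤ 1 := by
  rcases eq_or_lt_of_le h0 with h' | h'
  · simp [← h']
  · have := Real.log_le_sub_one_of_pos h'
    linarith

lemma abs_log_le_of_mem {a b t : ℝ} (ha : 0 < a) (h1 : a ≤ t) (h2 : t ≤ b) :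
    |Real.log t| ≤ |Real.log a| + |Real.log b| := by
  have ht : 0 < t := ha.trans_le h1
  rcases le_total t 1 with h | h
  · rw [abs_of_nonpos (Real.log_nonpos ht.le h)]
    have hl : Real.log a ≤ Real.log t := Real.log_le_log ha h1
    have : -Real.log t ≤ -Real.log a := by linarith
    exact this.trans ((neg_le_abs _).trans (le_add_of_nonneg_right (abs_nonneg _)))
  · rw [abs_of_nonneg (Real.log_nonneg h)]
    have hl : Real.log t ≤ Real.log b := Real.log_le_log ht h2
    exact hl.trans ((le_abs_self _).trans (le_add_of_nonneg_left (abs_nonneg _)))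

lemma norm_clog_le (x : ℂ) : ‖Complex.log x‖ ≤ |Real.log ‖x‖| + Real.pi := by
  have h := Complex.norm_le_abs_re_add_abs_im (Complex.log x)
  rw [Complex.log_re, Complex.log_im] at h
  have := Complex.abs_arg_le_pi x
  calc ‖Complex.log x‖ = ‖Complex.log x‖ := rfl
    _ ≤ |Real.log ‖x‖| + |x.arg| := h
    _ ≤ _ := by linarith

lemma branch (z₀ b : ℂ) {δ : ℝ} (hδ : 0 < δ) (hb : δ ≤ ‖z₀ - b‖) (hb2 : ‖z₀ - b‖ ≤ 5/2) :
    ∃ g : ℂ → ℂ, DifferentiableOn ℂ g (Metric.ball z₀ (δ/2)) ∧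
      (∀ w, (g w).re = Real.log ‖w - b‖) ∧
      ∀ w ∈ Metric.ball z₀ (δ/2), ‖g w‖ ≤ |Real.log (δ/2)| + |Real.log 4| + Real.pi := by
  have hnpos : (0:ℝ) < ‖z₀ - b‖ := lt_of_lt_of_le hδ hb
  set c : ℂ := (starRingEnd ℂ) (z₀ - b) / (‖z₀ - b‖ : ℝ) with hc
  have habs : ‖c‖ = 1 := by
    rw [hc, norm_div, Complex.norm_conj, Complex.norm_real, norm_norm, div_self hnpos.ne']
  have h1 : (z₀ - b) * c = ((‖z₀ - b‖ : ℝ) : ℂ) := by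
    rw [hc, mul_div_assoc', Complex.mul_conj, Complex.normSq_eq_norm_sq,
      div_eq_iff (Complex.ofReal_ne_zero.2 hnpos.ne')]
    push_cast
    ring
  have habsw : ∀ w : ℂ, ‖(w - b) * c‖ = ‖w - b‖ := by
    intro w
    rw [norm_mul, habs, mul_one]
  have hkey : ∀ w ∈ Metric.ball z₀ (δ/2),
      0 < ((w - b) * c).re ∧ δ/2 ≤ ‖w - b‖ ∧ ‖w - b‖ ≤ 4 := by
    intro w hw
    have hwz : ‖w - z₀‖ < δ/2 := by
      rw [← dist_eq_norm]; exact Metric.mem_ball.1 hw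
    have hsplit : (w - b) * c = (z₀ - b) * c + (w - z₀) * c := by ring
    have hre2 : |((w - z₀) * c).re| ≤ ‖w - z₀‖ := by
      calc |((w - z₀) * c).re| ≤ ‖(w - z₀) * c‖ := Complex.abs_re_le_norm _
        _ = ‖w - z₀‖ := by rw [norm_mul, habs, mul_one]
    have hrepos : 0 < ((w - b) * c).re := by
      rw [hsplit, Complex.add_re, h1, Complex.ofReal_re]
      have := abs_le.1 hre2
      linarith
    have hlow : δ/2 ≤ ‖w - b‖ := by
      have h := norm_sub_norm_le (z₀ - b) (z₀ - w)
      have he : (z₀ - b) - (z₀ - w) = w - b := by ring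
      rw [he] at h
      have hrev : ‖z₀ - w‖ = ‖w - z₀‖ := norm_sub_rev _ _
      linarith
    have hup : ‖w - b‖ ≤ 4 := by
      have h := norm_sub_le_norm_sub_add_norm_sub w z₀ b
      linarith
    exact ⟨hrepos, hlow, hup⟩
  refine ⟨fun w => Complex.log ((w - b) * c), ?_, ?_, ?_⟩
  · intro w hw
    refine DifferentiableAt.differentiableWithinAt ?_
    exact (Complex.differentiableAt_log (Or.inl (hkey w hw).1)).comp w
      ((differentiableAt_id.sub_const b).mul_const c)
  · intro w
    rw [Complex.log_re, habsw]
  · intro w hw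
    obtain ⟨-, hlow, hup⟩ := hkey w hw
    refine (norm_clog_le _).trans ?_
    rw [habsw w]
    have := abs_log_le_of_mem (by positivity : (0:ℝ) < δ/2) hlow hup
    linarith

lemma sep {z : ℂ} (hz : z ∈ Metric.ball (0:ℂ) 1 \ (Eplus ∪ Eminus)) :
    ∃ δ : ℝ, 0 < δ ∧ δ ≤ ‖z - 1/2‖ ∧ δ ≤ ‖z + 1/2‖ ∧
      ∀ n : ℕ, δ ≤ ‖z - aC n‖ ∧ δ ≤ ‖z + aC n‖ := by
  classical
  obtain ⟨hz1, hz2⟩ := hz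
  have hne : ∀ y ∈ Eplus ∪ Eminus, z ≠ y := fun y hy h => hz2 (h ▸ hy)
  have h1 : (0:ℝ) < ‖z - 1/2‖ := by
    rw [norm_pos_iff, sub_ne_zero]
    exact hne _ (Or.inl half_mem)
  have h2 : (0:ℝ) < ‖z + 1/2‖ := by
    rw [norm_pos_iff]
    intro h
    exact hne _ (Or.inr (neg_mem half_mem)) (add_eq_zero_iff_eq_neg.1 h)
  set ε := min ‖z - 1/2‖ ‖z + 1/2‖ with hε
  have hεpos : 0 < ε := lt_min h1 h2
  obtain ⟨N, hN⟩ := exists_nat_one_div_lt (show (0:ℝ) < ε/2 by positivity)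
  have hfar : ∀ n : ℕ, N ≤ n → ε/2 ≤ ‖z - aC n‖ ∧ ε/2 ≤ ‖z + aC n‖ := by
    intro n hn
    have hd : ‖aC n - 1/2‖ < ε/2 := by
      refine lt_of_le_of_lt ((norm_aC_sub_half n).trans ?_) hN
      have : ((N:ℝ)+1) ≤ ((n:ℝ)+1) := by
        have := (Nat.cast_le (α := ℝ)).2 hn; linarith
      exact one_div_le_one_div_of_le (by positivity) this
    have hε1 : ε ≤ ‖z - 1/2‖ := min_le_left _ _
    have hε2 : ε ≤ ‖z + 1/2‖ := min_le_right _ _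
    constructor
    · have h := norm_sub_norm_le (z - 1/2) (aC n - 1/2)
      have he : (z - 1/2) - (aC n - 1/2) = z - aC n := by ring
      rw [he] at h
      linarith
    · have h := norm_sub_norm_le (z + 1/2) (1/2 - aC n)
      have he : (z + 1/2) - (1/2 - aC n) = z + aC n := by ring
      have hrev : ‖(1/2 : ℂ) - aC n‖ = ‖aC n - 1/2‖ := norm_sub_rev _ _
      rw [he, hrev] at h
      linarith
  set F : ℕ → ℝ := fun n => min ‖z - aC n‖ ‖z + aC n‖ with hF
  set T : Finset ℝ := insert (ε/2) ((Finset.range N).image F) with hT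
  have hTne : T.Nonempty := Finset.insert_nonempty _ _
  have hhalf : T.min' hTne ≤ ε/2 := Finset.min'_le _ _ (Finset.mem_insert_self _ _)
  refine ⟨T.min' hTne, ?_, ?_, ?_, ?_⟩
  · have hmem := T.min'_mem hTne
    rcases Finset.mem_insert.1 hmem with h | h
    · rw [h]; positivity
    · obtain ⟨n, -, hFn⟩ := Finset.mem_image.1 h
      rw [← hFn]
      have hp1 : 0 < ‖z - aC n‖ := by
        rw [norm_pos_iff, sub_ne_zero]; exact hne _ (Or.inl (aC_mem n))
      have hp2 : 0 < ‖z + aC n‖ := by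
        rw [norm_pos_iff]
        intro h'
        exact hne _ (Or.inr (neg_mem (aC_mem n))) (add_eq_zero_iff_eq_neg.1 h')
      exact lt_min hp1 hp2
  · have := min_le_left ‖z - 1/2‖ ‖z + 1/2‖
    linarith
  · have := min_le_right ‖z - 1/2‖ ‖z + 1/2‖
    linarith
  · intro n
    rcases lt_or_ge n N with h | h
    · have hmem : F n ∈ T :=
        Finset.mem_insert_of_mem (Finset.mem_image_of_mem F (Finset.mem_range.2 h))
      have hle := Finset.min'_le _ _ hmem
      exact ⟨hle.trans (min_le_left _ _), hle.trans (min_le_right _ _)⟩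
    · obtain ⟨ha, hb⟩ := hfar n h
      exact ⟨hhalf.trans ha, hhalf.trans hb⟩

lemma uFun_eq (z : ℂ) : uFun z = Real.log ‖z - 1/2‖ + Real.log ‖z + 1/2‖ +
    ∑' n : ℕ, (2:ℝ) ^ (-((n:ℤ)+1)) *
      (Real.log ‖z - aC n‖ + Real.log ‖z + aC n‖) := rfl

lemma log_bounds {z : ℂ} (hz : ‖z‖ < 1) {b : ℂ} (hb : ‖b‖ ≤ 1) :
    Real.log ‖z - b‖ ≤ 1 ∧ Real.log ‖z + b‖ ≤ 1 :=
  ⟨log_le_one_of_le_two (norm_nonneg _) (by have := norm_sub_le z b; linarith),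
   log_le_one_of_le_two (norm_nonneg _) (by have := norm_add_le z b; linarith)⟩

lemma summable_at {z : ℂ} (hz : z ∈ Metric.ball (0:ℂ) 1 \ (Eplus ∪ Eminus)) :
    Summable (fun n : ℕ => (2:ℝ) ^ (-((n:ℤ)+1)) *
      (Real.log ‖z - aC n‖ + Real.log ‖z + aC n‖)) := by
  obtain ⟨δ, hδ, -, -, hδn⟩ := sep hz
  have hz1 : ‖z‖ < 1 := mem_ball_zero_iff.1 hz.1
  refine summable_w2_mul (C := 2*(|Real.log δ| + |Real.log 2|)) ?_
  intro n
  have hca := norm_aC_le n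
  have hub1 : ‖z - aC n‖ ≤ 2 := by have := norm_sub_le z (aC n); linarith
  have hub2 : ‖z + aC n‖ ≤ 2 := by have := norm_add_le z (aC n); linarith
  have b1 := abs_log_le_of_mem hδ (hδn n).1 hub1
  have b2 := abs_log_le_of_mem hδ (hδn n).2 hub2
  calc |Real.log ‖z - aC n‖ + Real.log ‖z + aC n‖|
      ≤ |Real.log ‖z - aC n‖| + |Real.log ‖z + aC n‖| := abs_add_le _ _
    _ ≤ _ := by linarith

lemma tsum_le_extract {z : ℂ} (hz : z ∈ Metric.ball (0:ℂ) 1 \ (Eplus ∪ Eminus)) (k : ℕ) :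
    ∑' n : ℕ, (2:ℝ) ^ (-((n:ℤ)+1)) * (Real.log ‖z - aC n‖ + Real.log ‖z + aC n‖)
      ≤ (2:ℝ) ^ (-((k:ℤ)+1)) * Real.log ‖z - aC k‖
        + (2:ℝ) ^ (-((k:ℤ)+1)) * Real.log ‖z + aC k‖ + 2 := by
  classical
  set f : ℕ → ℝ := fun n => (2:ℝ) ^ (-((n:ℤ)+1)) *
    (Real.log ‖z - aC n‖ + Real.log ‖z + aC n‖) with hf
  have hz1 : ‖z‖ < 1 := mem_ball_zero_iff.1 hz.1
  have hA : Summable f := summable_at hz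
  have hfb : ∀ n, f n ≤ (2:ℝ) ^ (-((n:ℤ)+1)) * 2 := by
    intro n
    obtain ⟨l1, l2⟩ := log_bounds hz1 ((norm_aC_le n).trans (by norm_num))
    exact mul_le_mul_of_nonneg_left (by linarith) (w2_pos n).le
  rw [Summable.tsum_eq_add_tsum_ite hA k]
  have hs2 : Summable (fun n => if n = k then 0 else f n) := by
    have h := hA.update k 0
    refine h.congr fun n => ?_
    rw [Function.update_apply]
  have hle : ∑' n, (if n = k then 0 else f n) ≤ ∑' n : ℕ, (2:ℝ) ^ (-((n:ℤ)+1)) * 2 := by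
    refine Summable.tsum_le_tsum ?_ hs2 (summable_w2_mul (C := 2) fun n => by norm_num)
    intro n
    by_cases h : n = k
    · simp only [h, if_pos rfl]
      positivity
    · simp only [if_neg h]
      exact hfb n
  rw [tsum_w2_mul_const 2] at hle
  have hfk : f k = (2:ℝ) ^ (-((k:ℤ)+1)) * Real.log ‖z - aC k‖
      + (2:ℝ) ^ (-((k:ℤ)+1)) * Real.log ‖z + aC k‖ := by
    rw [hf]; ring
  linarith

lemma key {x : ℂ} (hx : x ∈ Eplus ∪ Eminus) :
    ∃ c : ℝ, 0 < c ∧ ∃ K : ℝ, ∀ z ∈ Metric.ball (0:ℂ) 1 \ (Eplus ∪ Eminus),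
      uFun z ≤ K + c * Real.log ‖z - x‖ := by
  have main : ∀ z ∈ Metric.ball (0:ℂ) 1 \ (Eplus ∪ Eminus), True := fun _ _ => trivial
  rcases mem_cases hx with rfl | rfl | ⟨k, rfl⟩ | ⟨k, rfl⟩
  · refine ⟨1, one_pos, 3, fun z hz => ?_⟩
    have hz1 : ‖z‖ < 1 := mem_ball_zero_iff.1 hz.1
    obtain ⟨-, l2⟩ := log_bounds hz1 (show ‖(1/2:ℂ)‖ ≤ 1 by norm_num)
    have ht : ∑' n : ℕ, (2:ℝ) ^ (-((n:ℤ)+1)) *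
        (Real.log ‖z - aC n‖ + Real.log ‖z + aC n‖) ≤ 2 := by
      have hfb : ∀ n : ℕ, (2:ℝ) ^ (-((n:ℤ)+1)) *
          (Real.log ‖z - aC n‖ + Real.log ‖z + aC n‖) ≤ (2:ℝ) ^ (-((n:ℤ)+1)) * 2 := by
        intro n
        obtain ⟨l1', l2'⟩ := log_bounds hz1 ((norm_aC_le n).trans (by norm_num))
        exact mul_le_mul_of_nonneg_left (by linarith) (w2_pos n).le
      calc _ ≤ ∑' n : ℕ, (2:ℝ) ^ (-((n:ℤ)+1)) * 2 :=
            Summable.tsum_le_tsum hfb (summable_at hz) (summable_w2_mul (C := 2) fun n => by norm_num)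
        _ = 2 := tsum_w2_mul_const 2
    rw [uFun_eq]
    linarith
  · refine ⟨1, one_pos, 3, fun z hz => ?_⟩
    have hz1 : ‖z‖ < 1 := mem_ball_zero_iff.1 hz.1
    obtain ⟨l1, -⟩ := log_bounds hz1 (show ‖(1/2:ℂ)‖ ≤ 1 by norm_num)
    have ht : ∑' n : ℕ, (2:ℝ) ^ (-((n:ℤ)+1)) *
        (Real.log ‖z - aC n‖ + Real.log ‖z + aC n‖) ≤ 2 := by
      have hfb : ∀ n : ℕ, (2:ℝ) ^ (-((n:ℤ)+1)) *
          (Real.log ‖z - aC n‖ + Real.log ‖z + aC n‖) ≤ (2:ℝ) ^ (-((n:ℤ)+1)) * 2 := by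
        intro n
        obtain ⟨l1', l2'⟩ := log_bounds hz1 ((norm_aC_le n).trans (by norm_num))
        exact mul_le_mul_of_nonneg_left (by linarith) (w2_pos n).le
      calc _ ≤ ∑' n : ℕ, (2:ℝ) ^ (-((n:ℤ)+1)) * 2 :=
            Summable.tsum_le_tsum hfb (summable_at hz) (summable_w2_mul (C := 2) fun n => by norm_num)
        _ = 2 := tsum_w2_mul_const 2
    have hx' : z - -(1/2) = z + 1/2 := by ring
    rw [uFun_eq, hx']
    linarith
  · refine ⟨(2:ℝ) ^ (-((k:ℤ)+1)), w2_pos k, 5, fun z hz => ?_⟩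
    have hz1 : ‖z‖ < 1 := mem_ball_zero_iff.1 hz.1
    obtain ⟨l1, l2⟩ := log_bounds hz1 (show ‖(1/2:ℂ)‖ ≤ 1 by norm_num)
    have ht := tsum_le_extract hz k
    obtain ⟨-, lk2⟩ := log_bounds hz1 ((norm_aC_le k).trans (by norm_num))
    have hw1 : (2:ℝ) ^ (-((k:ℤ)+1)) * Real.log ‖z + aC k‖ ≤ 1 := by
      have h0 := (w2_pos k).le
      have h1 := w2_le_one k
      calc (2:ℝ) ^ (-((k:ℤ)+1)) * Real.log ‖z + aC k‖
          ≤ (2:ℝ) ^ (-((k:ℤ)+1)) * 1 := mul_le_mul_of_nonneg_left lk2 h0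
        _ ≤ 1 := by linarith
    rw [uFun_eq]
    linarith
  · refine ⟨(2:ℝ) ^ (-((k:ℤ)+1)), w2_pos k, 5, fun z hz => ?_⟩
    have hz1 : ‖z‖ < 1 := mem_ball_zero_iff.1 hz.1
    obtain ⟨l1, l2⟩ := log_bounds hz1 (show ‖(1/2:ℂ)‖ ≤ 1 by norm_num)
    have ht := tsum_le_extract hz k
    obtain ⟨lk1, -⟩ := log_bounds hz1 ((norm_aC_le k).trans (by norm_num))
    have hw1 : (2:ℝ) ^ (-((k:ℤ)+1)) * Real.log ‖z - aC k‖ ≤ 1 := by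
      have h0 := (w2_pos k).le
      have h1 := w2_le_one k
      calc (2:ℝ) ^ (-((k:ℤ)+1)) * Real.log ‖z - aC k‖
          ≤ (2:ℝ) ^ (-((k:ℤ)+1)) * 1 := mul_le_mul_of_nonneg_left lk1 h0
        _ ≤ 1 := by linarith
    have hx' : z - -aC k = z + aC k := by ring
    rw [uFun_eq, hx']
    linarith

lemma tendsto_of_bound {x : ℂ} (hx : x ∈ Eplus ∪ Eminus) {c K : ℝ} (hc : 0 < c)
    (hb : ∀ z ∈ Metric.ball (0:ℂ) 1 \ (Eplus ∪ Eminus),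
      uFun z ≤ K + c * Real.log ‖z - x‖) :
    Tendsto uFun (𝓝[Metric.ball (0:ℂ) 1 \ (Eplus ∪ Eminus)] x) atBot := by
  have hxs : x ∉ Metric.ball (0:ℂ) 1 \ (Eplus ∪ Eminus) := fun h => h.2 hx
  have h0 : Tendsto (fun z : ℂ => ‖z - x‖)
      (𝓝[Metric.ball (0:ℂ) 1 \ (Eplus ∪ Eminus)] x) (𝓝[>] 0) := by
    rw [tendsto_nhdsWithin_iff]
    constructor
    · have hcont : Continuous (fun z : ℂ => ‖z - x‖) := by fun_prop
      have h : Tendsto (fun z : ℂ => ‖z - x‖) (𝓝 x) (𝓝 0) := by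
        simpa using hcont.tendsto x
      exact h.mono_left nhdsWithin_le_nhds
    · filter_upwards [self_mem_nhdsWithin] with z hzs
      rw [Set.mem_Ioi, norm_pos_iff, sub_ne_zero]
      exact fun h => hxs (h ▸ hzs)
  have h1 : Tendsto (fun z : ℂ => Real.log ‖z - x‖)
      (𝓝[Metric.ball (0:ℂ) 1 \ (Eplus ∪ Eminus)] x) atBot :=
    Real.tendsto_log_nhdsGT_zero.comp h0
  have h2 := tendsto_atBot_add_const_left _ K (h1.const_mul_atBot hc)
  exact tendsto_atBot_mono' _ (eventually_nhdsWithin_of_forall hb) h2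

lemma harmonic_part : IsHarmonicOn uFun (Metric.ball (0:ℂ) 1 \ (Eplus ∪ Eminus)) := by
  intro z₀ hz₀
  obtain ⟨δ, hδ, hδ1, hδ2, hδn⟩ := sep hz₀
  have hz01 : ‖z₀‖ < 1 := mem_ball_zero_iff.1 hz₀.1
  have hb52 : ∀ b : ℂ, ‖b‖ ≤ 1 → ‖z₀ - b‖ ≤ 5/2 := by
    intro b hb
    have := norm_sub_le z₀ b
    linarith
  obtain ⟨g₀, hg₀d, hg₀re, hg₀b⟩ := branch z₀ (1/2) hδ hδ1 (hb52 _ (by norm_num))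
  obtain ⟨g₁, hg₁d, hg₁re, hg₁b⟩ := branch z₀ (-(1/2)) hδ
    (by rw [sub_neg_eq_add]; exact hδ2) (hb52 _ (by norm_num))
  have hp : ∀ n : ℕ, ∃ g : ℂ → ℂ, DifferentiableOn ℂ g (Metric.ball z₀ (δ/2)) ∧
      (∀ w, (g w).re = Real.log ‖w - aC n‖) ∧
      ∀ w ∈ Metric.ball z₀ (δ/2), ‖g w‖ ≤ |Real.log (δ/2)| + |Real.log 4| + Real.pi :=
    fun n => branch z₀ (aC n) hδ (hδn n).1 (hb52 _ ((norm_aC_le n).trans (by norm_num)))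
  choose gp hpd hpre hpb using hp
  have hm : ∀ n : ℕ, ∃ g : ℂ → ℂ, DifferentiableOn ℂ g (Metric.ball z₀ (δ/2)) ∧
      (∀ w, (g w).re = Real.log ‖w - (-aC n)‖) ∧
      ∀ w ∈ Metric.ball z₀ (δ/2), ‖g w‖ ≤ |Real.log (δ/2)| + |Real.log 4| + Real.pi :=
    fun n => branch z₀ (-aC n) hδ (by rw [sub_neg_eq_add]; exact (hδn n).2)
      (hb52 _ (by rw [norm_neg]; exact (norm_aC_le n).trans (by norm_num)))
  choose gm hmd hmre hmb using hm
  set B : ℝ := |Real.log (δ/2)| + |Real.log 4| + Real.pi with hB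
  have hBpos : 0 ≤ B := by
    have := Real.pi_pos
    have := abs_nonneg (Real.log (δ/2))
    have := abs_nonneg (Real.log 4)
    rw [hB]; linarith
  set F : ℕ → ℂ → ℂ :=
    fun n w => (((2:ℝ) ^ (-((n:ℤ)+1)) : ℝ) : ℂ) * (gp n w + gm n w) with hFdef
  have hFb : ∀ (n : ℕ), ∀ w ∈ Metric.ball z₀ (δ/2),
      ‖F n w‖ ≤ (2:ℝ) ^ (-((n:ℤ)+1)) * (2*B) := by
    intro n w hw
    rw [hFdef]
    simp only [norm_mul, Complex.norm_real, Real.norm_eq_abs,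
      abs_of_pos (w2_pos n)]
    have h1 := hpb n w hw
    have h2 := hmb n w hw
    have h3 : ‖gp n w + gm n w‖ ≤ 2*B := by
      have := norm_add_le (gp n w) (gm n w)
      linarith
    exact mul_le_mul_of_nonneg_left h3 (w2_pos n).le
  have hsum : Summable (fun n : ℕ => (2:ℝ) ^ (-((n:ℤ)+1)) * (2*B)) :=
    summable_w2_mul (C := 2*B) fun n => by rw [abs_of_nonneg (by linarith)]
  refine ⟨δ/2, by positivity, fun w => g₀ w + g₁ w + ∑' n, F n w, ?_, ?_⟩
  · refine DifferentiableOn.add (hg₀d.add hg₁d) ?_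
    refine Complex.differentiableOn_tsum_of_summable_norm hsum ?_ Metric.isOpen_ball hFb
    intro n
    exact ((hpd n).add (hmd n)).const_mul _
  · rintro w ⟨hw1, -⟩
    have hSw : Summable (fun n => F n w) :=
      Summable.of_norm_bounded hsum fun n => hFb n w hw1
    have hre : (∑' n, F n w).re = ∑' n, (F n w).re := by
      have h := Complex.reCLM.map_tsum hSw
      simpa only [Complex.reCLM_apply] using h
    have h₀ : (g₀ w).re = Real.log ‖w - 1/2‖ := hg₀re w
    have h₁ : (g₁ w).re = Real.log ‖w + 1/2‖ := by rw [hg₁re w, sub_neg_eq_add]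
    have hterm : ∀ n : ℕ, (F n w).re =
        (2:ℝ) ^ (-((n:ℤ)+1)) * (Real.log ‖w - aC n‖ + Real.log ‖w + aC n‖) := by
      intro n
      rw [hFdef]
      simp only [Complex.re_ofReal_mul, Complex.add_re]
      rw [hpre n w, hmre n w, sub_neg_eq_add]
    rw [uFun_eq, Complex.add_re, Complex.add_re, h₀, h₁, hre, tsum_congr hterm]


/-- `u` is harmonic on `D \ (E₊ ∪ E₋)` and tends to `-∞` at every point of `E₊ ∪ E₋`. -/
theorem uFun_harmonic_and_tendsto_atBot :
    IsHarmonicOn uFun (Metric.ball (0 : ℂ) 1 \ (Eplus ∪ Eminus)) ∧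
    ∀ x ∈ Eplus ∪ Eminus,
      Tendsto uFun (𝓝[Metric.ball (0 : ℂ) 1 \ (Eplus ∪ Eminus)] x) atBot := by
  constructor
  · exact harmonic_part
  · intro x hx
    obtain ⟨c, hc, K, hb⟩ := key hx
    exact tendsto_of_bound hx hc hb
end

section
/- Let F : M → ℂ be holomorphic on a connected complex manifold M, and let D ⊂ ℂ be the open unit disc with a holomorphic surjection p : M → D whose fibers are connected. Suppose F vanishes identically on the fiber p⁻¹(z) for every z in a subset E ⊂ D having an accumulation point in D, and suppose F is not identically zero on at least one fiber p⁻¹(w) for some w ∈ D. Then we reach a contradiction; i.e., if F vanishes on all fibers over E then F ≡ 0 on M. -/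
open scoped Manifold
open Metric

/-- Identity theorem propagation along lines: a holomorphic function on a ball in a complex
normed space vanishing on a small subball around the center vanishes on the whole ball. -/
lemma line_propagation_aux {H : Type*} [NormedAddCommGroup H] [NormedSpace ℂ H]
    {f : H → ℂ} {a : H} {r R : ℝ} (hr : 0 < r) (hrR : r ≤ R)
    (hd : DifferentiableOn ℂ f (Metric.ball a R))
    (h0 : ∀ u ∈ Metric.ball a r, f u = 0) :
    ∀ u ∈ Metric.ball a R, f u = 0 := by
  intro u hu
  rcases eq_or_ne u a with rfl | hne
  · exact h0 u (Metric.mem_ball_self hr)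
  set d := u - a with hd'
  have hdn : 0 < ‖d‖ := by
    rw [norm_pos_iff]
    simpa [hd', sub_eq_zero] using hne
  set g : ℂ → ℂ := fun w => f (a + w • d) with hg
  have hmap : ∀ {s : ℝ}, ∀ w ∈ Metric.ball (0:ℂ) (s / ‖d‖), a + w • d ∈ Metric.ball a s := by
    intro s w hw
    rw [Metric.mem_ball, dist_eq_norm] at hw ⊢
    have h1 : ‖a + w • d - a‖ = ‖w‖ * ‖d‖ := by simp [norm_smul]
    have h2 : ‖w‖ < s / ‖d‖ := by simpa using hw
    rw [h1]
    exact (lt_div_iff₀ hdn).1 h2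
  have hgd : DifferentiableOn ℂ g (Metric.ball (0:ℂ) (R / ‖d‖)) := by
    apply hd.comp
    · exact ((differentiable_id.smul_const d).const_add a).differentiableOn
    · intro w hw; exact hmap w hw
  have hga : AnalyticOnNhd ℂ g (Metric.ball (0:ℂ) (R / ‖d‖)) :=
    hgd.analyticOnNhd Metric.isOpen_ball
  have h0mem : (0:ℂ) ∈ Metric.ball (0:ℂ) (R / ‖d‖) :=
    Metric.mem_ball_self (div_pos (hr.trans_le hrR) hdn)
  have hfreq : ∃ᶠ w in nhdsWithin (0:ℂ) {(0:ℂ)}ᶜ, g w = 0 := by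
    have hev : ∀ᶠ w in nhds (0:ℂ), g w = 0 := by
      have hb : Metric.ball (0:ℂ) (r / ‖d‖) ∈ nhds (0:ℂ) :=
        Metric.ball_mem_nhds _ (div_pos hr hdn)
      exact Filter.eventually_of_mem hb fun w hw => h0 _ (hmap w hw)
    exact (hev.filter_mono nhdsWithin_le_nhds).frequently
  have heq := hga.eqOn_zero_of_preconnected_of_frequently_eq_zero
    (convex_ball _ _).isPreconnected h0mem hfreq
  have h1mem : (1:ℂ) ∈ Metric.ball (0:ℂ) (R / ‖d‖) := by
    rw [Metric.mem_ball, dist_zero_right]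
    rw [Metric.mem_ball, dist_eq_norm] at hu
    have : ‖d‖ < R := by simpa [hd'] using hu
    simpa using (lt_div_iff₀ hdn).2 (by simpa using this)
  have := heq h1mem
  simpa [hg, hd'] using this

/-- Reading a holomorphic function on a manifold in an extended chart gives a holomorphic
function on the chart target. -/
lemma chart_diffOn_aux {H : Type*} [NormedAddCommGroup H] [NormedSpace ℂ H]
    {M : Type*} [TopologicalSpace M] [ChartedSpace H M]
    [IsManifold 𝓘(ℂ, H) (⊤ : ℕ∞) M]
    {F : M → ℂ} (hF : MDifferentiable 𝓘(ℂ, H) 𝓘(ℂ, ℂ) F) (x : M) :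
    DifferentiableOn ℂ (F ∘ (extChartAt 𝓘(ℂ, H) x).symm) (extChartAt 𝓘(ℂ, H) x).target := by
  have h1 : MDifferentiableOn 𝓘(ℂ, H) 𝓘(ℂ, ℂ) (F ∘ (extChartAt 𝓘(ℂ, H) x).symm)
      (extChartAt 𝓘(ℂ, H) x).target :=
    (hF.mdifferentiableOn (s := Set.univ)).comp
      (mdifferentiableOn_extChartAt_symm (x := x)) (by simp)
  exact h1.differentiableOn

set_option maxHeartbeats 1000000 in
/-- Identity-theorem argument on fibers: a holomorphic function on a connected complex
manifold `M` with a holomorphic surjection `p` onto the unit disc with connected fibers,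
vanishing on all fibers over a set `E` having an accumulation point in the disc,
vanishes identically (so it cannot be nonzero on any fiber). -/
theorem vanishing_on_fibers_over_accumulating_set
    {H : Type*} [NormedAddCommGroup H] [NormedSpace ℂ H]
    {M : Type*} [TopologicalSpace M] [ChartedSpace H M]
    [IsManifold 𝓘(ℂ, H) (⊤ : ℕ∞) M]
    [ConnectedSpace M]
    (F : M → ℂ) (hF : MDifferentiable 𝓘(ℂ, H) 𝓘(ℂ, ℂ) F)
    (p : M → ℂ) (hp : MDifferentiable 𝓘(ℂ, H) 𝓘(ℂ, ℂ) p)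
    (hrange : Set.range p = Metric.ball (0 : ℂ) 1)
    (hsubmersion : ∀ x : M, Function.Surjective (mfderiv 𝓘(ℂ, H) 𝓘(ℂ, ℂ) p x))
    (hfibers : ∀ z ∈ Metric.ball (0 : ℂ) 1, IsConnected (p ⁻¹' {z}))
    (E : Set ℂ) (hE : E ⊆ Metric.ball (0 : ℂ) 1)
    (z₀ : ℂ) (hz₀ : z₀ ∈ Metric.ball (0 : ℂ) 1) (hacc : AccPt z₀ (Filter.principal E))
    (hvanish : ∀ z ∈ E, ∀ x ∈ p ⁻¹' {z}, F x = 0) :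
    ∀ x : M, F x = 0 := by
  obtain ⟨x₀, hpx₀⟩ : ∃ x, p x = z₀ := by
    have : z₀ ∈ Set.range p := by rw [hrange]; exact hz₀
    exact this
  have hsub : Function.Surjective (mfderiv 𝓘(ℂ, H) 𝓘(ℂ, ℂ) p x₀) := hsubmersion x₀
  -- Step 1: `F` vanishes on a neighborhood of `x₀`.
  have hx₀U : ∀ᶠ y in nhds x₀, F y = 0 := by
    set e := extChartAt 𝓘(ℂ, H) x₀ with he
    have hxs : x₀ ∈ e.source := mem_extChartAt_source x₀
    set a := e x₀ with ha
    have hto : IsOpen e.target := isOpen_extChartAt_target x₀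
    have hta : a ∈ e.target := mem_extChartAt_target x₀
    obtain ⟨ρ, hρ, hballρ⟩ := Metric.isOpen_iff.1 hto a hta
    set f : H → ℂ := F ∘ e.symm with hfdef
    set q : H → ℂ := p ∘ e.symm with hqdef
    have hfd : DifferentiableOn ℂ f e.target := chart_diffOn_aux hF x₀
    have hqd : DifferentiableOn ℂ q e.target := chart_diffOn_aux hp x₀
    have hqa0 : q a = z₀ := by
      simp only [hqdef, Function.comp_apply, ha]
      rw [e.left_inv hxs, hpx₀]
    -- the derivative of q at a
    have hmfd : mfderiv 𝓘(ℂ, H) 𝓘(ℂ, ℂ) p x₀ = fderiv ℂ q a := by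
      rw [(hp x₀).mfderiv]
      rw [ModelWithCorners.Boundaryless.range_eq_univ, fderivWithin_univ]
      congr 1
    have hqsurj : Function.Surjective (fderiv ℂ q a) := by
      rw [← hmfd]; exact hsub
    obtain ⟨v, hv⟩ := hqsurj 1
    set L := fderiv ℂ q a with hL
    have hvne : v ≠ 0 := by
      intro h
      rw [h] at hv
      simp at hv
    set c := ‖v‖ with hc
    have hcpos : 0 < c := norm_pos_iff.2 hvne
  
    have hqc : ContinuousOn q e.target :=
      hp.continuous.comp_continuousOn (continuousOn_extChartAt_symm x₀)
    have hfc : ContinuousOn f e.target :=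
      hF.continuous.comp_continuousOn (continuousOn_extChartAt_symm x₀)
    -- no ball on which q is identically z₀
    have hnoball : ∀ y₁ ∈ Metric.ball a (ρ/4), ∀ ε > (0:ℝ),
        ∃ u ∈ Metric.ball y₁ ε, q u ≠ z₀ := by
      intro y₁ hy₁ ε hε
      by_contra hcon
      push_neg at hcon
      have hsubt : Metric.ball y₁ (ρ/2) ⊆ e.target := by
        intro u hu
        rw [Metric.mem_ball] at hy₁ hu
        exact hballρ (Metric.mem_ball.2 (by
          calc dist u a ≤ dist u y₁ + dist y₁ a := dist_triangle _ _ _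
            _ < ρ/2 + ρ/4 := by linarith
            _ < ρ := by linarith))
      have hprop : ∀ u ∈ Metric.ball y₁ (ρ/2), q u - z₀ = 0 := by
        apply line_propagation_aux (r := min ε (ρ/2)) (by positivity) (min_le_right _ _)
        · exact (hqd.mono hsubt).sub (differentiableOn_const _)
        · intro u hu
          rw [sub_eq_zero]
          exact hcon u (Metric.ball_subset_ball (min_le_left _ _) hu)
      have haball : a ∈ Metric.ball y₁ (ρ/2) := by
        rw [Metric.mem_ball, dist_comm]
        rw [Metric.mem_ball] at hy₁
        linarith
      have hev : q =ᶠ[nhds a] fun _ => z₀ := by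
        refine Filter.eventuallyEq_of_mem (Metric.isOpen_ball.mem_nhds haball) fun u hu => ?_
        exact sub_eq_zero.1 (hprop u hu)
      have hzero : L = 0 := by
        rw [hL, hev.fderiv_eq, fderiv_fun_const]
        rfl
      rw [hzero] at hv
      simp at hv
    -- derivative of q along the line through a in direction v
    have hqaD : DifferentiableAt ℂ q a := hqd.differentiableAt (hto.mem_nhds hta)
    have hlin : HasDerivAt (fun w : ℂ => q (a + w • v)) 1 0 := by
      have h1 : HasDerivAt (fun w : ℂ => a + w • v) v 0 := by
        simpa using ((hasDerivAt_id (0:ℂ)).smul_const v).const_add a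
      have h2 : HasFDerivAt q L (a + (0:ℂ) • v) := by
        simpa using hqaD.hasFDerivAt
      have := h2.comp_hasDerivAt 0 h1
      simpa [hv, Function.comp_def] using this
    set r' := ρ/(2*(c+1)) with hr'
    have hr'pos : 0 < r' := by positivity
    have hmapa : ∀ w : ℂ, ‖w‖ < r' → a + w • v ∈ Metric.ball a ρ := by
      intro w hw
      rw [Metric.mem_ball, dist_eq_norm]
      have h1 : ‖a + w • v - a‖ = ‖w‖ * c := by simp [norm_smul, hc]
      rw [h1]
      have h2 : ‖w‖ * c < r' * c := by
        rcases eq_or_lt_of_le (norm_nonneg w) with h | h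
        · rw [← h]; simpa using mul_pos hr'pos hcpos
        · exact mul_lt_mul_of_pos_right hw hcpos
      have h3 : r' * c < ρ := by
        rw [hr']
        rw [div_mul_eq_mul_div, div_lt_iff₀ (by positivity)]
        nlinarith
      linarith
    have hΦd : DifferentiableOn ℂ (fun w : ℂ => q (a + w • v)) (Metric.ball (0:ℂ) r') := by
      apply (hqd.mono (fun u hu => hballρ hu)).comp
      · exact ((differentiable_id.smul_const v).const_add a).differentiableOn
      · intro w hw
        rw [Metric.mem_ball, dist_zero_right] at hw
        exact hmapa w hw
  
    -- isolated zeros of q(a + w v) - z₀ at 0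
    have hΦa : AnalyticAt ℂ (fun w : ℂ => q (a + w • v) - z₀) 0 :=
      ((hΦd.analyticAt (Metric.isOpen_ball.mem_nhds (Metric.mem_ball_self hr'pos))).sub
        analyticAt_const)
    have hne0 : ∀ᶠ w in nhdsWithin (0:ℂ) {(0:ℂ)}ᶜ, q (a + w • v) - z₀ ≠ 0 := by
      rcases hΦa.eventually_eq_zero_or_eventually_ne_zero with hz | hz
      · exfalso
        have hcongr : (fun _ : ℂ => z₀) =ᶠ[nhds (0:ℂ)] fun w => q (a + w • v) := by
          filter_upwards [hz] with w hw
          rw [sub_eq_zero] at hw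
          exact hw.symm
        have h0 : HasDerivAt (fun _ : ℂ => z₀) 1 0 := hlin.congr_of_eventuallyEq hcongr
        have h1 : HasDerivAt (fun _ : ℂ => z₀) 0 0 := hasDerivAt_const 0 z₀
        exact one_ne_zero (h0.unique h1)
      · exact hz
    rw [eventually_nhdsWithin_iff] at hne0
    obtain ⟨ε, hεpos, hballε⟩ := Metric.eventually_nhds_iff.1 hne0
    set r := min (ε/2) (r'/2) with hrdef
    have hrpos : 0 < r := by positivity
    have hrr' : r < r' := by
      calc r ≤ r'/2 := min_le_right _ _
        _ < r' := by linarith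
    have hiso : ∀ w : ℂ, w ≠ 0 → ‖w‖ ≤ r → q (a + w • v) ≠ z₀ := by
      intro w hw hwr
      have h1 : dist w 0 < ε := by
        rw [dist_zero_right]
        calc ‖w‖ ≤ r := hwr
          _ ≤ ε/2 := min_le_left _ _
          _ < ε := by linarith
      have := hballε h1 (by simpa using hw)
      rwa [sub_ne_zero] at this
    -- minimum of the modulus on the circle of radius r
    have hsphne : (Metric.sphere (0:ℂ) r).Nonempty := NormedSpace.sphere_nonempty.2 hrpos.le
    have hsphsub : Metric.sphere (0:ℂ) r ⊆ Metric.ball (0:ℂ) r' := by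
      intro w hw
      rw [Metric.mem_sphere, dist_zero_right] at hw
      rw [Metric.mem_ball, dist_zero_right, hw]
      exact hrr'
    have hcontΦ : ContinuousOn (fun w : ℂ => ‖q (a + w • v) - z₀‖) (Metric.sphere 0 r) :=
      (((hΦd.continuousOn.mono hsphsub).sub continuousOn_const).norm)
    obtain ⟨w₁, hw₁s, hw₁min⟩ := (isCompact_sphere (0:ℂ) r).exists_isMinOn hsphne hcontΦ
    set δ := ‖q (a + w₁ • v) - z₀‖ with hδdef
    have hw₁r : ‖w₁‖ = r := by
      rw [Metric.mem_sphere, dist_zero_right] at hw₁s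
      exact hw₁s
    have hδpos : 0 < δ := by
      rw [hδdef, norm_pos_iff, sub_ne_zero]
      have hw₁ne : w₁ ≠ 0 := by
        intro h
        rw [h] at hw₁r
        simp at hw₁r
        linarith
      intro h
      exact hiso w₁ hw₁ne hw₁r.le h
  
    have hr'c : r' * c < ρ/2 := by
      rw [hr', div_mul_eq_mul_div, div_lt_iff₀ (by positivity)]
      nlinarith
    have hmapy : ∀ y ∈ Metric.ball a (ρ/4), ∀ w : ℂ, ‖w‖ < r' →
        y + w • v ∈ Metric.ball a ρ := by
      intro y hy w hw
      rw [Metric.mem_ball] at hy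
      rw [Metric.mem_ball, dist_eq_norm]
      have h1 : ‖y + w • v - a‖ ≤ ‖y - a‖ + ‖w‖ * c := by
        calc ‖y + w • v - a‖ = ‖(y - a) + w • v‖ := by rw [add_sub_right_comm]
          _ ≤ ‖y - a‖ + ‖w • v‖ := norm_add_le _ _
          _ = ‖y - a‖ + ‖w‖ * c := by rw [norm_smul]
      have h2 : ‖w‖ * c ≤ r' * c := mul_le_mul_of_nonneg_right hw.le hcpos.le
      have h3 : ‖y - a‖ < ρ/4 := by rwa [← dist_eq_norm]
      linarith
    -- tube lemma: uniform closeness on the circle for y near a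
    set Ω : Set (H × ℂ) := (Prod.fst ⁻¹' Metric.ball a (ρ/4)) ∩
      ((fun yw : H × ℂ => yw.1 + yw.2 • v) ⁻¹' Metric.ball a ρ) ∩
      ((fun yw : H × ℂ => a + yw.2 • v) ⁻¹' Metric.ball a ρ) with hΩdef
    have hcont1 : Continuous (fun yw : H × ℂ => yw.1 + yw.2 • v) :=
      continuous_fst.add (continuous_snd.smul continuous_const)
    have hcont2 : Continuous (fun yw : H × ℂ => a + yw.2 • v) :=
      continuous_const.add (continuous_snd.smul continuous_const)
    have hΩopen : IsOpen Ω :=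
      ((Metric.isOpen_ball.preimage continuous_fst).inter
        (Metric.isOpen_ball.preimage hcont1)).inter (Metric.isOpen_ball.preimage hcont2)
    have hg1c : ContinuousOn (fun yw : H × ℂ => ‖q (yw.1 + yw.2 • v) - q (a + yw.2 • v)‖) Ω := by
      apply ContinuousOn.norm
      apply ContinuousOn.sub
      · exact hqc.comp hcont1.continuousOn fun yw hyw => hballρ hyw.1.2
      · exact hqc.comp hcont2.continuousOn fun yw hyw => hballρ hyw.2
    have hg2c : ContinuousOn (fun yw : H × ℂ => ‖q yw.1 - z₀‖) Ω := by
      apply ContinuousOn.norm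
      apply ContinuousOn.sub _ continuousOn_const
      apply hqc.comp continuous_fst.continuousOn
      intro yw hyw
      exact hballρ (Metric.ball_subset_ball (by linarith) hyw.1.1)
    set n : Set (H × ℂ) := {yw ∈ Ω | ‖q (yw.1 + yw.2 • v) - q (a + yw.2 • v)‖ < δ/2 ∧
        ‖q yw.1 - z₀‖ < δ/2} with hndef
    have hnopen : IsOpen n := by
      have h1 : n = (Ω ∩ (fun yw : H × ℂ => ‖q (yw.1 + yw.2 • v) - q (a + yw.2 • v)‖) ⁻¹'
          (Set.Iio (δ/2))) ∩ ((fun yw : H × ℂ => ‖q yw.1 - z₀‖) ⁻¹' (Set.Iio (δ/2))) := by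
        ext yw
        simp only [hndef, Set.mem_setOf_eq, Set.mem_inter_iff, Set.mem_preimage, Set.mem_Iio]
        tauto
      rw [h1]
      apply ContinuousOn.isOpen_inter_preimage _ _ isOpen_Iio
      · exact hg2c.mono Set.inter_subset_left
      · exact hg1c.isOpen_inter_preimage hΩopen isOpen_Iio
    have hsubn : ({a} : Set H) ×ˢ Metric.sphere (0:ℂ) r ⊆ n := by
      rintro ⟨y, w⟩ ⟨hy, hw⟩
      rw [Set.mem_singleton_iff] at hy
      subst hy
      rw [Metric.mem_sphere, dist_zero_right] at hw
      have hwr' : ‖w‖ < r' := by rw [hw]; exact hrr'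
      refine ⟨⟨⟨Metric.mem_ball_self (by positivity), ?_⟩, ?_⟩, ?_, ?_⟩
      · exact hmapy a (Metric.mem_ball_self (by positivity)) w hwr'
      · exact hmapa w hwr'
      · simpa using (by positivity : (0:ℝ) < δ/2)
      · rw [hqa0]
        simpa using (by positivity : (0:ℝ) < δ/2)
    obtain ⟨u₁, u₂, hu₁o, hu₂o, hau₁, hsu₂, huv⟩ :=
      generalized_tube_lemma isCompact_singleton (isCompact_sphere (0:ℂ) r) hnopen hsubn
  
    -- key dichotomy for points near a
    have hkey : ∀ y ∈ u₁ ∩ Metric.ball a (ρ/4), q y = z₀ ∨ f y = 0 := by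
      intro y hy
      obtain ⟨hy1, hy4⟩ := hy
      have hnmem : ∀ w ∈ Metric.sphere (0:ℂ) r, ((y, w) : H × ℂ) ∈ n :=
        fun w hw => huv (Set.mk_mem_prod hy1 (hsu₂ hw))
      have hgyd : DifferentiableOn ℂ (fun w : ℂ => q (y + w • v)) (Metric.ball (0:ℂ) r') := by
        apply (hqd.mono (fun u hu => hballρ hu)).comp
        · exact ((differentiable_id.smul_const v).const_add y).differentiableOn
        · intro w hw
          rw [Metric.mem_ball, dist_zero_right] at hw
          exact hmapy y hy4 w hw
      have hb2 : ‖q y - z₀‖ < δ/2 := (hnmem w₁ hw₁s).2.2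
      have hbd : ∀ w ∈ Metric.sphere (0:ℂ) r, δ/2 ≤ ‖q (y + w • v) - z₀‖ := by
        intro w hw
        have h1 := (hnmem w hw).2.1
        have h2 : δ ≤ ‖q (a + w • v) - z₀‖ := hw₁min hw
        have h3 := dist_triangle (q (a + w • v)) (q (y + w • v)) z₀
        rw [dist_eq_norm, dist_eq_norm, dist_eq_norm] at h3
        have h4 : ‖q (a + w • v) - q (y + w • v)‖ = ‖q (y + w • v) - q (a + w • v)‖ :=
          norm_sub_rev _ _
        linarith
      have hroot : ∃ w₀ ∈ Metric.ball (0:ℂ) r, q (y + w₀ • v) = z₀ := by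
        by_contra hcon
        push_neg at hcon
        have hnz : ∀ w ∈ Metric.closedBall (0:ℂ) r, q (y + w • v) - z₀ ≠ 0 := by
          intro w hw
          rw [Metric.mem_closedBall, dist_zero_right] at hw
          rw [sub_ne_zero]
          rcases lt_or_eq_of_le hw with h | h
          · exact hcon w (Metric.mem_ball.2 (by rwa [dist_zero_right]))
          · intro heq
            have hb := hbd w (by rwa [Metric.mem_sphere, dist_zero_right])
            rw [heq] at hb
            simp only [sub_self, norm_zero] at hb
            linarith
        set G : ℂ → ℂ := fun w => (q (y + w • v) - z₀)⁻¹ with hGdef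
        have hGd : DiffContOnCl ℂ G (Metric.ball (0:ℂ) r) := by
          constructor
          · apply DifferentiableOn.inv
            · exact (hgyd.mono (Metric.ball_subset_ball hrr'.le)).sub (differentiableOn_const _)
            · intro w hw; exact hnz w (Metric.ball_subset_closedBall hw)
          · rw [closure_ball _ hrpos.ne']
            apply ContinuousOn.inv₀
            · apply ContinuousOn.sub _ continuousOn_const
              exact hgyd.continuousOn.mono (Metric.closedBall_subset_ball hrr')
            · exact hnz
        have hGb : ∀ w ∈ frontier (Metric.ball (0:ℂ) r), ‖G w‖ ≤ (δ/2)⁻¹ := by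
          intro w hw
          rw [frontier_ball _ hrpos.ne'] at hw
          simp only [hGdef, norm_inv]
          exact inv_anti₀ (by positivity) (hbd w hw)
        have h0cl : (0:ℂ) ∈ closure (Metric.ball (0:ℂ) r) :=
          subset_closure (Metric.mem_ball_self hrpos)
        have hb := Complex.norm_le_of_forall_mem_frontier_norm_le Metric.isBounded_ball hGd hGb h0cl
        simp only [hGdef, norm_inv] at hb
        have h5 : q (y + (0:ℂ) • v) = q y := by simp
        rw [h5] at hb
        have h7 := hnz 0 (Metric.mem_closedBall_self hrpos.le)
        rw [h5] at h7
        have h8 : 0 < ‖q y - z₀‖ := norm_pos_iff.2 h7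
        have h9 : δ/2 ≤ ‖q y - z₀‖ := by
          rwa [inv_le_inv₀ h8 (by positivity)] at hb
        linarith
      obtain ⟨w₀, hw₀b, hw₀⟩ := hroot
      have hw₀' : w₀ ∈ Metric.ball (0:ℂ) r' := Metric.ball_subset_ball hrr'.le hw₀b
      have hgyA : AnalyticAt ℂ (fun w : ℂ => q (y + w • v)) w₀ :=
        hgyd.analyticAt (Metric.isOpen_ball.mem_nhds hw₀')
      rcases hgyA.eventually_constant_or_nhds_le_map_nhds with hconst | hopen
      · left
        have hA : AnalyticOnNhd ℂ (fun w : ℂ => q (y + w • v) - z₀) (Metric.ball (0:ℂ) r') :=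
          (hgyd.sub (differentiableOn_const _)).analyticOnNhd Metric.isOpen_ball
        have hfr : ∃ᶠ w in nhdsWithin w₀ {w₀}ᶜ, q (y + w • v) - z₀ = 0 := by
          apply Filter.Eventually.frequently
          apply Filter.Eventually.filter_mono nhdsWithin_le_nhds
          filter_upwards [hconst] with w hw
          rw [hw, hw₀, sub_self]
        have heq := hA.eqOn_zero_of_preconnected_of_frequently_eq_zero
          (convex_ball _ _).isPreconnected hw₀' hfr
        have h0 := heq (Metric.mem_ball_self hr'pos)
        simpa [sub_eq_zero] using h0
      · right
        have hfreqE : ∃ᶠ z in nhds z₀, z ∈ E ∧ z ≠ z₀ := by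
          have h := (accPt_iff_frequently (x := z₀) (C := E)).1 hacc
          exact h.mono fun z hz => ⟨hz.2, hz.1⟩
        rw [hw₀] at hopen
        have h2 : ∃ᶠ w in nhds w₀, q (y + w • v) ∈ E ∧ q (y + w • v) ≠ z₀ := by
          have h3 := hfreqE.filter_mono hopen
          rwa [Filter.frequently_map] at h3
        have hfreq0 : ∃ᶠ w in nhdsWithin w₀ {w₀}ᶜ, f (y + w • v) = 0 := by
          rw [frequently_nhdsWithin_iff]
          refine h2.mono fun w hw => ⟨?_, ?_⟩
          · exact hvanish (q (y + w • v)) hw.1 (e.symm (y + w • v)) (by simp [hqdef])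
          · exact Set.mem_compl_singleton_iff.2 fun heq => hw.2 (by rw [heq, hw₀])
        have hfyd : DifferentiableOn ℂ (fun w : ℂ => f (y + w • v)) (Metric.ball (0:ℂ) r') := by
          apply (hfd.mono (fun u hu => hballρ hu)).comp
          · exact ((differentiable_id.smul_const v).const_add y).differentiableOn
          · intro w hw
            rw [Metric.mem_ball, dist_zero_right] at hw
            exact hmapy y hy4 w hw
        have heq := (hfyd.analyticOnNhd
            Metric.isOpen_ball).eqOn_zero_of_preconnected_of_frequently_eq_zero
          (convex_ball _ _).isPreconnected hw₀' hfreq0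
        have h0 := heq (Metric.mem_ball_self hr'pos)
        simpa using h0
    -- conclude: f vanishes on a neighborhood of a
    have hfzero : ∀ y ∈ u₁ ∩ Metric.ball a (ρ/4), f y = 0 := by
      intro y hy
      by_contra hfy
      have hyt : y ∈ e.target := hballρ (Metric.ball_subset_ball (by linarith) hy.2)
      have hfca : ContinuousAt f y := hfc.continuousAt (hto.mem_nhds hyt)
      have hne' : ∀ᶠ u in nhds y, f u ≠ 0 := hfca.eventually_ne hfy
      have hmem : ∀ᶠ u in nhds y, u ∈ u₁ ∩ Metric.ball a (ρ/4) :=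
        Filter.eventually_of_mem ((hu₁o.inter Metric.isOpen_ball).mem_nhds hy) fun _ h => h
      obtain ⟨ε', hε', hball''⟩ := Metric.eventually_nhds_iff.1 (hne'.and hmem)
      obtain ⟨u, huball, hune⟩ := hnoball y hy.2 ε' hε'
      have h := hball'' (Metric.mem_ball.1 huball)
      rcases hkey u h.2 with h1 | h1
      · exact hune h1
      · exact h.1 h1
    have haU : a ∈ u₁ ∩ Metric.ball a (ρ/4) :=
      ⟨hau₁ rfl, Metric.mem_ball_self (by positivity)⟩
    have hce : ContinuousAt e x₀ :=
      (continuousOn_extChartAt _).continuousAt (extChartAt_source_mem_nhds x₀)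
    have hNx : e.source ∩ e ⁻¹' (u₁ ∩ Metric.ball a (ρ/4)) ∈ nhds x₀ :=
      Filter.inter_mem (extChartAt_source_mem_nhds x₀)
        (hce.preimage_mem_nhds ((hu₁o.inter Metric.isOpen_ball).mem_nhds haU))
    refine Filter.eventually_of_mem hNx fun x' hx' => ?_
    have := hfzero (e x') hx'.2
    simpa [hfdef, e.left_inv hx'.1] using this
  -- Step 2: the set where `F` vanishes locally is clopen, hence everything.

  set U : Set M := {x | ∀ᶠ y in nhds x, F y = 0} with hUdef
  have hUopen : IsOpen U := by
    rw [isOpen_iff_mem_nhds]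
    intro x hx
    have := hx.eventually_nhds
    exact this.mono fun y hy => hy
  have hUclosed : IsClosed U := by
    rw [← closure_subset_iff_isClosed]
    intro x hxcl
    set e := extChartAt 𝓘(ℂ, H) x with he
    have hxs : x ∈ e.source := mem_extChartAt_source x
    have hto : IsOpen e.target := isOpen_extChartAt_target x
    have hta : e x ∈ e.target := mem_extChartAt_target x
    obtain ⟨R, hR, hballR⟩ := Metric.isOpen_iff.1 hto _ hta
    have hce : ContinuousAt e x :=
      (continuousOn_extChartAt _).continuousAt (extChartAt_source_mem_nhds x)
    have hN : e.source ∩ e ⁻¹' (Metric.ball (e x) (R/2)) ∈ nhds x :=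
      Filter.inter_mem (extChartAt_source_mem_nhds x)
        (hce.preimage_mem_nhds (Metric.isOpen_ball.mem_nhds (Metric.mem_ball_self (by linarith))))
    obtain ⟨y, ⟨⟨hys, hyb⟩, hyU⟩⟩ := (mem_closure_iff_nhds.1 hxcl) _ hN
    rw [Set.mem_preimage, Metric.mem_ball] at hyb
    set b := e y with hb
    have hbt : b ∈ e.target := hballR (Metric.mem_ball.2 (by linarith [hyb]))
    have hcsymm : ContinuousAt e.symm b := (continuousOn_extChartAt_symm x).continuousAt
      (hto.mem_nhds hbt)
    have hsymmb : e.symm b = y := e.left_inv hys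
    have hev : ∀ᶠ u in nhds b, F (e.symm u) = 0 := by
      have ht : Filter.Tendsto e.symm (nhds b) (nhds y) := by
        rw [← hsymmb]; exact hcsymm
      exact ht.eventually hyU
    obtain ⟨ε, hε, hballε⟩ := Metric.eventually_nhds_iff.1 hev
    have hdd : DifferentiableOn ℂ (F ∘ e.symm) (Metric.ball b (R/2)) := by
      apply (chart_diffOn_aux hF x).mono
      intro u hu
      rw [Metric.mem_ball] at hu
      exact hballR (Metric.mem_ball.2 (by
        calc dist u (e x) ≤ dist u b + dist b (e x) := dist_triangle _ _ _
          _ < R/2 + R/2 := by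
              have : dist b (e x) < R/2 := by simpa [hb] using hyb
              linarith
          _ = R := by ring))
    have hzz : ∀ u ∈ Metric.ball b (min (ε/2) (R/2)), (F ∘ e.symm) u = 0 := by
      intro u hu
      rw [Metric.mem_ball] at hu
      exact hballε (by
        calc dist u b < min (ε/2) (R/2) := hu
          _ ≤ ε/2 := min_le_left _ _
          _ < ε := by linarith)
    have hzero : ∀ u ∈ Metric.ball b (R/2), (F ∘ e.symm) u = 0 :=
      line_propagation_aux (by positivity) (min_le_right _ _) hdd hzz
    have hexb : e x ∈ Metric.ball b (R/2) := by
      rw [Metric.mem_ball, dist_comm]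
      simpa [hb] using hyb
    have hN' : e.source ∩ e ⁻¹' (Metric.ball b (R/2)) ∈ nhds x :=
      Filter.inter_mem (extChartAt_source_mem_nhds x)
        (hce.preimage_mem_nhds (Metric.isOpen_ball.mem_nhds hexb))
    refine Filter.eventually_of_mem hN' fun x' hx' => ?_
    have := hzero (e x') hx'.2
    simpa [e.left_inv hx'.1] using this
  have hUuniv : U = Set.univ :=
    IsClopen.eq_univ ⟨hUclosed, hUopen⟩ ⟨x₀, hx₀U⟩
  intro x
  have hx : x ∈ U := hUuniv ▸ Set.mem_univ x
  exact hx.self_of_nhds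
end
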